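/- Let x, y ∈ ℝˢ with |x| ≥ 1, |y| ≥ 1, and let x = x₀, x₁, ..., xₘ = y be a finite chain with |xᵢ| < 1 for all 1 ≤ i ≤ m−1. Then Σᵢ₌₁ᵐ δ^φ(x_{i-1}, xᵢ) ≥ |x/|x| − y/|y||. -/

import Mathlib

noncomputable def deltaPhi {X : Type*} [MetricSpace X] (m : X) (φ : X → X → ℝ) (x y : X) : ℝ :=
  min (dist x y) (1 / (1 + dist m x) + φ x y + 1 / (1 + dist m y))

noncomputable def dPhi {X : Type*} [MetricSpace X] (m : X) (φ : X → X → ℝ) (x y : X) : ℝ :=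
  sInf { r : ℝ | ∃ (n : ℕ) (f : ℕ → X), 1 ≤ n ∧ f 0 = x ∧ f n = y ∧
    r = ∑ i ∈ Finset.range n, deltaPhi m φ (f i) (f (i + 1)) }

/-- aₘ = 1 + 1/2 + ⋯ + 1/m. -/
noncomputable def harm (m : ℕ) : ℝ := ∑ k ∈ Finset.range m, (1 : ℝ) / (k + 1)

-- The function φ for the standard compactification of ℝˢ:
-- φ(x,y) = 0 if y = (a_q/a_p) x for some p,q ≥ 1; φ(x,y) = (1/aₘ)|x−y| if x,y
-- lie on the sphere Sₘ of radius aₘ (note ‖x‖ = aₘ there); |x−y| otherwise.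
open Classical in
noncomputable def phiStd (s : ℕ) (x y : EuclideanSpace ℝ (Fin s)) : ℝ :=
  if ∃ p q : ℕ, 1 ≤ p ∧ 1 ≤ q ∧ y = (harm q / harm p) • x then 0
  else if ∃ m : ℕ, 1 ≤ m ∧ ‖x‖ = harm m ∧ ‖y‖ = harm m then (1 / ‖x‖) * ‖x - y‖
  else ‖x - y‖


open RealInnerProductSpace

section aux
variable {E : Type*} [NormedAddCommGroup E] [InnerProductSpace ℝ E]

noncomputable def projB (z : E) : E := if ‖z‖ ≤ 1 then z else ‖z‖⁻¹ • z

lemma norm_le_of_sq_le {x y : ℝ} (hx : 0 ≤ x) (hy : 0 ≤ y) (h : x^2 ≤ y^2) : x ≤ y := by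
  nlinarith

lemma key1' (a u : E) (hu : ‖u‖ = 1) (ha : ‖a‖ ≤ 1) (B : ℝ) (hB : 1 ≤ B) :
    ‖a - u‖ ≤ ‖a - B • u‖ := by
  apply norm_le_of_sq_le (norm_nonneg _) (norm_nonneg _)
  have h1 : ‖a - u‖^2 = ‖a‖^2 - 2 * (inner ℝ a u : ℝ) + ‖u‖^2 := norm_sub_sq_real a u
  have h2 : ‖a - B • u‖^2 = ‖a‖^2 - 2 * (B * (inner ℝ a u : ℝ)) + ‖B • u‖^2 := by
    rw [norm_sub_sq_real, real_inner_smul_right]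
  have h3 : ‖B • u‖ = B := by
    rw [norm_smul, hu, Real.norm_eq_abs, abs_of_nonneg (by linarith), mul_one]
  have ht := abs_real_inner_le_norm a u
  rw [hu, mul_one, abs_le] at ht
  rw [hu] at h1
  rw [h3] at h2
  nlinarith [ht.1, ht.2, mul_nonneg (by linarith : (0:ℝ) ≤ B - 1)
    (by linarith [ht.2] : (0:ℝ) ≤ B + 1 - 2 * (inner ℝ a u : ℝ))]

lemma key2' (u v : E) (hu : ‖u‖ = 1) (hv : ‖v‖ = 1) (A B : ℝ) (hA : 1 ≤ A) (hB : 1 ≤ B) :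
    ‖u - v‖ ≤ ‖A • u - B • v‖ := by
  apply norm_le_of_sq_le (norm_nonneg _) (norm_nonneg _)
  have h1 : ‖u - v‖^2 = ‖u‖^2 - 2 * (inner ℝ u v : ℝ) + ‖v‖^2 := norm_sub_sq_real u v
  have h2 : ‖A • u - B • v‖^2 = ‖A • u‖^2 - 2 * (A * (B * (inner ℝ u v : ℝ))) + ‖B • v‖^2 := by
    rw [norm_sub_sq_real, real_inner_smul_left, real_inner_smul_right]
  have h3 : ‖A • u‖ = A := by
    rw [norm_smul, hu, Real.norm_eq_abs, abs_of_nonneg (by linarith), mul_one]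
  have h4 : ‖B • v‖ = B := by
    rw [norm_smul, hv, Real.norm_eq_abs, abs_of_nonneg (by linarith), mul_one]
  have ht := abs_real_inner_le_norm u v
  rw [hu, hv, one_mul, abs_le] at ht
  nlinarith [ht.1, ht.2, sq_nonneg (A - B), mul_nonneg (sub_nonneg.2 ht.2) (by nlinarith : (0:ℝ) ≤ A*B - 1)]

lemma projB_of_one_le {a : E} (ha : 1 ≤ ‖a‖) : projB a = ‖a‖⁻¹ • a := by
  unfold projB
  split_ifs with h
  · have h1 : ‖a‖ = 1 := le_antisymm h ha
    rw [h1, inv_one, one_smul]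
  · rfl

lemma projB_lip (a b : E) : ‖projB a - projB b‖ ≤ ‖a - b‖ := by
  by_cases ha : ‖a‖ ≤ 1 <;> by_cases hb : ‖b‖ ≤ 1
  · unfold projB; rw [if_pos ha, if_pos hb]
  · have hb1 : 1 ≤ ‖b‖ := le_of_not_ge hb
    have hbne : b ≠ 0 := by intro h; rw [h, norm_zero] at hb1; linarith
    rw [projB_of_one_le hb1]
    unfold projB; rw [if_pos ha]
    have := key1' a (‖b‖⁻¹ • b) (norm_smul_inv_norm hbne) ha ‖b‖ hb1
    rwa [smul_inv_smul₀ (norm_ne_zero_iff.2 hbne)] at this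
  · have ha1 : 1 ≤ ‖a‖ := le_of_not_ge ha
    have hane : a ≠ 0 := by intro h; rw [h, norm_zero] at ha1; linarith
    rw [projB_of_one_le ha1]
    unfold projB; rw [if_pos hb]
    have := key1' b (‖a‖⁻¹ • a) (norm_smul_inv_norm hane) hb ‖a‖ ha1
    rw [smul_inv_smul₀ (norm_ne_zero_iff.2 hane)] at this
    rw [norm_sub_rev, norm_sub_rev a b]
    exact this
  · have ha1 : 1 ≤ ‖a‖ := le_of_not_ge ha
    have hb1 : 1 ≤ ‖b‖ := le_of_not_ge hb
    have hane : a ≠ 0 := by intro h; rw [h, norm_zero] at ha1; linarith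
    have hbne : b ≠ 0 := by intro h; rw [h, norm_zero] at hb1; linarith
    rw [projB_of_one_le ha1, projB_of_one_le hb1]
    have := key2' (‖a‖⁻¹ • a) (‖b‖⁻¹ • b) (norm_smul_inv_norm hane)
      (norm_smul_inv_norm hbne) ‖a‖ ‖b‖ ha1 hb1
    rwa [smul_inv_smul₀ (norm_ne_zero_iff.2 hane),
      smul_inv_smul₀ (norm_ne_zero_iff.2 hbne)] at this

lemma one_sub_min_le {r : ℝ} (hr : 0 ≤ r) : 1 - min 1 r ≤ 1 / (1 + r) := by
  rcases le_total 1 r with h | h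
  · rw [min_eq_left h]
    have : (0:ℝ) ≤ 1 / (1 + r) := by positivity
    linarith
  · rw [min_eq_right h, le_div_iff₀ (by linarith)]
    nlinarith

lemma min_diff {p q : ℝ} (hp : 0 ≤ p) (hq : 0 ≤ q) :
    |min 1 p - min 1 q| ≤ 1 / (1 + p) + 1 / (1 + q) := by
  have h1 := one_sub_min_le hp
  have h2 := one_sub_min_le hq
  have h3 : min 1 p ≤ 1 := min_le_left _ _
  have h4 : min 1 q ≤ 1 := min_le_left _ _
  have h5 : (0:ℝ) ≤ 1 / (1 + p) := by positivity
  have h6 : (0:ℝ) ≤ 1 / (1 + q) := by positivity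
  rw [abs_le]
  constructor <;> linarith

lemma norm_unit {a : E} (ha : a ≠ 0) : ‖(‖a‖⁻¹ • a)‖ = 1 := by
  rw [norm_smul, norm_inv, norm_norm, inv_mul_cancel₀ (norm_ne_zero_iff.2 ha)]

lemma projB_eq_min_smul (a : E) (ha : a ≠ 0) : projB a = min 1 ‖a‖ • (‖a‖⁻¹ • a) := by
  unfold projB
  have hna : ‖a‖ ≠ 0 := norm_ne_zero_iff.2 ha
  split_ifs with h
  · rw [min_eq_right h, smul_smul, mul_inv_cancel₀ hna, one_smul]
  · rw [min_eq_left (le_of_not_ge h), one_smul]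

lemma projB_smul_le (a : E) (c : ℝ) (hc : 0 < c) :
    ‖projB a - projB (c • a)‖ ≤ 1 / (1 + ‖a‖) + 1 / (1 + ‖c • a‖) := by
  rcases eq_or_ne a 0 with rfl | ha
  · simp [projB]
  · have hna : ‖a‖ ≠ 0 := norm_ne_zero_iff.2 ha
    have hca : c • a ≠ 0 := smul_ne_zero (ne_of_gt hc) ha
    have hnca : ‖c • a‖ = c * ‖a‖ := by
      rw [norm_smul, Real.norm_eq_abs, abs_of_pos hc]
    have hu : ‖c • a‖⁻¹ • (c • a) = ‖a‖⁻¹ • a := by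
      rw [hnca, smul_smul]
      congr 1
      field_simp
    rw [projB_eq_min_smul a ha, projB_eq_min_smul (c • a) hca, hu, ← sub_smul,
      norm_smul, norm_unit ha, mul_one, Real.norm_eq_abs]
    exact min_diff (norm_nonneg a) (norm_nonneg (c • a))

end aux

lemma one_le_harm {m : ℕ} (hm : 1 ≤ m) : 1 ≤ harm m := by
  have h1 : harm 1 ≤ harm m := by
    apply Finset.sum_le_sum_of_subset_of_nonneg (Finset.range_subset_range.2 hm)
    intro i _ _
    positivity
  have : harm 1 = 1 := by simp [harm]
  linarith

lemma harm_pos {m : ℕ} (hm : 1 ≤ m) : 0 < harm m := lt_of_lt_of_le one_pos (one_le_harm hm)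

lemma step_le (s : ℕ) (a b : EuclideanSpace ℝ (Fin s)) :
    ‖projB a - projB b‖ ≤ deltaPhi 0 (phiStd s) a b := by
  rw [deltaPhi]
  apply le_min
  · rw [dist_eq_norm]
    exact projB_lip a b
  · simp only [dist_zero_left]
    have hpa : (0:ℝ) ≤ 1 / (1 + ‖a‖) := by positivity
    have hpb : (0:ℝ) ≤ 1 / (1 + ‖b‖) := by positivity
    rw [phiStd]
    split_ifs with h1 h2
    · obtain ⟨p, q, hp, hq, hb⟩ := h1
      subst hb
      have hc : 0 < harm q / harm p := div_pos (harm_pos hq) (harm_pos hp)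
      have := projB_smul_le a (harm q / harm p) hc
      linarith
    · obtain ⟨n, hn, hna, hnb⟩ := h2
      have h1a : 1 ≤ ‖a‖ := hna ▸ one_le_harm hn
      have h1b : 1 ≤ ‖b‖ := hnb ▸ one_le_harm hn
      rw [projB_of_one_le h1a, projB_of_one_le h1b, hnb, ← hna, ← smul_sub,
        norm_smul, norm_inv, norm_norm]
      have : ‖a‖⁻¹ * ‖a - b‖ = 1 / ‖a‖ * ‖a - b‖ := by ring
      linarith [this.le]
    · have := projB_lip a b
      linarith

theorem stmt13' (s : ℕ) (hs : 2 ≤ s) (x y : EuclideanSpace ℝ (Fin s))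
    (hx : 1 ≤ ‖x‖) (hy : 1 ≤ ‖y‖)
    (m : ℕ) (hm : 1 ≤ m) (f : ℕ → EuclideanSpace ℝ (Fin s))
    (h0 : f 0 = x) (hfm : f m = y)
    (hmid : ∀ i, 1 ≤ i → i ≤ m - 1 → ‖f i‖ < 1) :
    ∑ i ∈ Finset.range m, deltaPhi (0 : EuclideanSpace ℝ (Fin s)) (phiStd s) (f i) (f (i + 1))
      ≥ ‖‖x‖⁻¹ • x - ‖y‖⁻¹ • y‖ := by
  have h1 : ‖‖x‖⁻¹ • x - ‖y‖⁻¹ • y‖ = dist (projB (f 0)) (projB (f m)) := by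
    rw [h0, hfm, projB_of_one_le hx, projB_of_one_le hy, dist_eq_norm]
  rw [ge_iff_le, h1]
  calc dist (projB (f 0)) (projB (f m))
      ≤ ∑ i ∈ Finset.range m, dist (projB (f i)) (projB (f (i + 1))) :=
        dist_le_range_sum_dist (fun i => projB (f i)) m
    _ ≤ ∑ i ∈ Finset.range m, deltaPhi (0 : EuclideanSpace ℝ (Fin s)) (phiStd s) (f i) (f (i + 1)) := by
        apply Finset.sum_le_sum
        intro i _
        rw [dist_eq_norm]
        exact step_le s (f i) (f (i + 1))

/-- Chains from x to y passing only through the open unit ball have δ^φ-length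
at least the distance between the radial projections of x and y to the unit sphere. -/
theorem stmt13 (s : ℕ) (hs : 2 ≤ s) (x y : EuclideanSpace ℝ (Fin s))
    (hx : 1 ≤ ‖x‖) (hy : 1 ≤ ‖y‖)
    (m : ℕ) (hm : 1 ≤ m) (f : ℕ → EuclideanSpace ℝ (Fin s))
    (h0 : f 0 = x) (hfm : f m = y)
    (hmid : ∀ i, 1 ≤ i → i ≤ m - 1 → ‖f i‖ < 1) :
    ∑ i ∈ Finset.range m, deltaPhi (0 : EuclideanSpace ℝ (Fin s)) (phiStd s) (f i) (f (i + 1))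
      ≥ ‖‖x‖⁻¹ • x - ‖y‖⁻¹ • y‖ := by
  exact stmt13' s hs x y hx hy m hm f h0 hfm hmid
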